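/- Let A ⊆ B be noetherian rings with B integral over A and B a torsion-free A-module, where A is reduced and equidimensional of finite dimension. If P is a minimal prime of B and p = P ∩ A, then p is a minimal prime of A and dim(B/P) = dim(A/p) = dim A. -/

import Mathlib

set_option synthInstance.maxHeartbeats 1000000
set_option maxHeartbeats 1000000

universe u v

/-- A noetherian ring is equidimensional if it has finite Krull dimension and
`dim (R ⧸ q) = dim R` for every minimal prime `q`. -/
def IsEquidimensionalRing (R : Type u) [CommRing R] : Prop :=
  ringKrullDim R < ⊤ ∧ ∀ q ∈ minimalPrimes R, ringKrullDim (R ⧸ q) = ringKrullDim R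

section Aux

variable {R : Type*} {S : Type*} [CommRing R] [CommRing S]

/-- Elements of minimal primes are zero divisors. -/
lemma aux_mem_minimalPrimes_not_nonZeroDivisor {P : Ideal R} (hP : P ∈ minimalPrimes R)
    {x : R} (hx : x ∈ P) : x ∉ nonZeroDivisors R := by
  haveI : P.IsPrime := hP.1.1
  intro hxnd
  have hmem : algebraMap R (Localization P.primeCompl) x ∈
      IsLocalRing.maximalIdeal (Localization P.primeCompl) := by
    rw [← Localization.AtPrime.comap_maximalIdeal (I := P)] at hx
    exact hx
  obtain ⟨n, hn⟩ := (by haveI : Ring.KrullDimLE 0 (Localization.AtPrime P) := .of_isLocalization _ hP _;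
                         exact Ring.KrullDimLE.isNilpotent_iff_mem_maximalIdeal.mpr hmem :
    IsNilpotent (algebraMap R (Localization P.primeCompl) x))
  rw [← map_pow, IsLocalization.map_eq_zero_iff P.primeCompl] at hn
  obtain ⟨m, hm⟩ := hn
  have hm0 : (m : R) = 0 := (mem_nonZeroDivisors_iff_right.mp (pow_mem hxnd n)) _ hm
  exact m.2 (hm0 ▸ P.zero_mem)

/-- In a reduced ring, every zero divisor lies in some minimal prime. -/
lemma aux_exists_minimalPrime_of_not_nonZeroDivisor [IsReduced R] {x : R}
    (hx : x ∉ nonZeroDivisors R) : ∃ q ∈ minimalPrimes R, x ∈ q := by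
  rw [mem_nonZeroDivisors_iff_right] at hx
  push_neg at hx
  obtain ⟨z, hz0, hz⟩ := hx
  have hrad : (⊥ : Ideal R).radical = ⊥ := by
    simpa [nilradical] using (nilradical_eq_zero R)
  have hsinf : sInf ((⊥ : Ideal R).minimalPrimes) = (⊥ : Ideal R) := by
    rw [Ideal.sInf_minimalPrimes, hrad]
  have hznot : z ∉ sInf ((⊥ : Ideal R).minimalPrimes) := by
    rw [hsinf]; exact fun h => hz h
  rw [Ideal.mem_sInf] at hznot
  push_neg at hznot
  obtain ⟨q, hq, hzq⟩ := hznot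
  haveI : q.IsPrime := hq.1.1
  refine ⟨q, hq, ?_⟩
  rcases this.mul_mem_iff_mem_or_mem.mp (show z * x ∈ q from hz0 ▸ q.zero_mem) with h | h
  · exact absurd h hzq
  · exact h

variable [Algebra R S] [Algebra.IsIntegral R S]

lemma aux_ringKrullDim_le : ringKrullDim S ≤ ringKrullDim R := by
  refine Order.krullDim_le_of_strictMono
    (fun x : PrimeSpectrum S => ⟨x.asIdeal.comap (algebraMap R S), inferInstance⟩) ?_
  intro x y hxy
  obtain ⟨z, hzy, hzx⟩ := SetLike.exists_of_lt (show x.asIdeal < y.asIdeal from hxy)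
  exact Ideal.comap_lt_comap_of_integral_mem_sdiff (I := x.asIdeal) (J := y.asIdeal)
    (le_of_lt hxy) ⟨hzy, hzx⟩ (Algebra.IsIntegral.isIntegral z)

lemma aux_ringKrullDim_ge (hinj : Function.Injective (algebraMap R S)) :
    ringKrullDim R ≤ ringKrullDim S := by
  have key : ∀ n (p : LTSeries (PrimeSpectrum R)), p.length = n →
      ∃ q : LTSeries (PrimeSpectrum S), q.length = n ∧
        q.last.asIdeal.comap (algebraMap R S) = p.last.asIdeal := by
    intro n
    induction n with
    | zero =>
      intro p hp
      haveI := p.last.isPrime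
      obtain ⟨Q, hQge, hQprime, hQc⟩ := Ideal.exists_ideal_over_prime_of_isIntegral
        p.last.asIdeal ⊥ (by
          rw [show Ideal.comap (algebraMap R S) ⊥ = RingHom.ker (algebraMap R S) from rfl,
            (RingHom.injective_iff_ker_eq_bot _).mp hinj]
          exact bot_le)
      exact ⟨RelSeries.singleton _ ⟨Q, hQprime⟩, rfl, hQc⟩
    | succ n ih =>
      intro p hp
      obtain ⟨q, hq, hqc⟩ := ih p.eraseLast (by simp [RelSeries.eraseLast, hp])
      have hlt := p.eraseLast_last_rel_last (by omega)
      haveI := p.last.isPrime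
      haveI := q.last.isPrime
      obtain ⟨Q, hQge, hQprime, hQc⟩ := Ideal.exists_ideal_over_prime_of_isIntegral
        p.last.asIdeal q.last.asIdeal (by rw [hqc]; exact le_of_lt hlt)
      have hQlt : q.last < (⟨Q, hQprime⟩ : PrimeSpectrum S) := by
        refine lt_of_le_of_ne hQge ?_
        intro h
        apply ne_of_lt (show p.eraseLast.last < p.last from hlt)
        apply PrimeSpectrum.ext
        rw [← hqc, ← hQc]
        exact congrArg (Ideal.comap (algebraMap R S)) (congrArg PrimeSpectrum.asIdeal h)
      exact ⟨q.snoc ⟨Q, hQprime⟩ hQlt, by simp [hq], by rw [RelSeries.last_snoc]; exact hQc⟩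
  show Order.krullDim (PrimeSpectrum R) ≤ Order.krullDim (PrimeSpectrum S)
  rw [Order.krullDim, Order.krullDim]
  refine iSup_le fun p => ?_
  obtain ⟨q, hq, -⟩ := key p.length p rfl
  exact hq ▸ le_iSup (fun q : LTSeries (PrimeSpectrum S) => (q.length : WithBot ℕ∞)) q

lemma aux_ringKrullDim_eq (hinj : Function.Injective (algebraMap R S)) :
    ringKrullDim S = ringKrullDim R :=
  le_antisymm aux_ringKrullDim_le (aux_ringKrullDim_ge hinj)

end Aux

/-- Let `A ⊆ B` be noetherian rings with `B` integral over `A` and torsion-free as an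
`A`-module, where `A` is reduced and equidimensional of finite dimension.  If `P` is a
minimal prime of `B` and `p = P ∩ A`, then `p` is a minimal prime of `A` and
`dim (B ⧸ P) = dim (A ⧸ p) = dim A`. -/
theorem minimal_prime_contraction_of_integral_torsionFree
    (A : Type u) (B : Type v) [CommRing A] [CommRing B]
    [IsNoetherianRing A] [IsNoetherianRing B]
    [IsReduced A] [Algebra A B] [Algebra.IsIntegral A B]
    (hinj : Function.Injective (algebraMap A B))
    (hA : IsEquidimensionalRing A)
    (htf : ∀ a ∈ nonZeroDivisors A, ∀ b : B, a • b = 0 → b = 0)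
    (P : Ideal B) (hP : P ∈ minimalPrimes B) :
    P.comap (algebraMap A B) ∈ minimalPrimes A ∧
    ringKrullDim (B ⧸ P) = ringKrullDim (A ⧸ P.comap (algebraMap A B)) ∧
    ringKrullDim (A ⧸ P.comap (algebraMap A B)) = ringKrullDim A := by
  haveI : P.IsPrime := hP.1.1
  set p := P.comap (algebraMap A B) with hpdef
  -- every element of p is a zero divisor in A
  have hzd : ∀ a ∈ p, a ∉ nonZeroDivisors A := by
    intro a ha hand
    have h1 : algebraMap A B a ∉ nonZeroDivisors B :=
      aux_mem_minimalPrimes_not_nonZeroDivisor hP ha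
    rw [mem_nonZeroDivisors_iff_right] at h1
    push_neg at h1
    obtain ⟨b, hb0, hb⟩ := h1
    exact hb (htf a hand b (by rw [Algebra.smul_def, mul_comm]; exact hb0))
  -- hence p is contained in the union of the minimal primes of A
  have hsub : (p : Set A) ⊆ ⋃ q ∈ minimalPrimes A, (q : Set A) := by
    intro a ha
    obtain ⟨q, hq, haq⟩ := aux_exists_minimalPrime_of_not_nonZeroDivisor (hzd a ha)
    exact Set.mem_biUnion hq haq
  -- prime avoidance
  have hfin := minimalPrimes.finite_of_isNoetherianRing A
  have hsub' : (p : Set A) ⊆ ⋃ q ∈ (hfin.toFinset : Set (Ideal A)), (q : Set A) := by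
    intro a ha
    simpa [Set.Finite.coe_toFinset] using hsub ha
  obtain ⟨q, hqmem, hpq⟩ := (Ideal.subset_union_prime (⊥ : Ideal A) ⊥
    (fun i hi _ _ => (hfin.mem_toFinset.mp hi).1.1)).mp hsub'
  have hq : q ∈ minimalPrimes A := hfin.mem_toFinset.mp hqmem
  -- p contains a minimal prime
  haveI : p.IsPrime := Ideal.IsPrime.comap _
  obtain ⟨q0, hq0, hq0p⟩ := Ideal.exists_minimalPrimes_le (I := (⊥ : Ideal A)) (J := p) bot_le
  have hq_le_q0 : q ≤ q0 := hq.2 hq0.1 (le_trans hq0p hpq)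
  have hpeq : p = q := le_antisymm hpq (le_trans hq_le_q0 hq0p)
  have hpmin : p ∈ minimalPrimes A := hpeq ▸ hq
  refine ⟨hpmin, ?_, hA.2 p hpmin⟩
  -- dimension equality via integral extension of quotients
  exact aux_ringKrullDim_eq (R := A ⧸ P.under A) (S := B ⧸ P)
    (FaithfulSMul.algebraMap_injective (A ⧸ P.under A) (B ⧸ P))
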